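/- Let 0 < λ₀ < λ₁, let T ∈ (0, ∞], and let γ : [0,T) → [0,∞) be a continuous function such that γ(0) ≤ λ₀ and F(γ(t)) ≤ F(λ₀) for all t ∈ [0,T). Then γ(t) ≤ λ₀ for all t ∈ [0,T); in particular γ(t) < λ₁ for all t ∈ [0,T). -/

import Mathlib

open ENNReal

/-- Trapping argument for the stable set (Lemma 3.2): with `F x = x²/2 − (Bᵏ/k) xᵏ`,
`k > 2`, `B > 0`, `λ₁ = B^(−k/(k−2))`, `0 < λ₀ < λ₁`, `T ∈ (0,∞]`, and
`γ : [0,T) → [0,∞)` continuous with `γ(0) ≤ λ₀` and `F(γ(t)) ≤ F(λ₀)` on `[0,T)`,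
one has `γ(t) ≤ λ₀` (hence `γ(t) < λ₁`) for all `t ∈ [0,T)`. -/
theorem stable_set_trapping
    (k B : ℝ) (hk : 2 < k) (hB : 0 < B)
    (F : ℝ → ℝ) (hF : ∀ x, F x = x ^ 2 / 2 - B ^ k / k * x ^ k)
    (l1 l0 : ℝ) (hl1 : l1 = B ^ (-k / (k - 2)))
    (hl0_pos : 0 < l0) (hl0_lt : l0 < l1)
    (T : ℝ≥0∞) (hT : 0 < T)
    (γ : ℝ → ℝ)
    (hγ_cont : ContinuousOn γ {t : ℝ | 0 ≤ t ∧ ENNReal.ofReal t < T})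
    (hγ_nonneg : ∀ t : ℝ, 0 ≤ t → ENNReal.ofReal t < T → 0 ≤ γ t)
    (hγ_zero : γ 0 ≤ l0)
    (hγ_F : ∀ t : ℝ, 0 ≤ t → ENNReal.ofReal t < T → F (γ t) ≤ F l0) :
    ∀ t : ℝ, 0 ≤ t → ENNReal.ofReal t < T → γ t ≤ l0 ∧ γ t < l1 := by
  have hk0 : (0:ℝ) < k := by linarith
  have hk2 : k - 2 ≠ 0 := by linarith
  have hFeq : F = fun x : ℝ => x ^ 2 / 2 - B ^ k / k * x ^ k := funext hF
  have hl1_pos : 0 < l1 := by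
    rw [hl1]; exact Real.rpow_pos_of_pos hB _
  have hl1pow : l1 ^ (k - 2) = B ^ (-k) := by
    rw [hl1, ← Real.rpow_mul hB.le, div_mul_cancel₀ _ hk2]
  -- derivative of F
  have hderivF : ∀ x : ℝ, x ≠ 0 → HasDerivAt F (x - B ^ k * x ^ (k - 1)) x := by
    intro x hx
    have h1 : HasDerivAt (fun x : ℝ => x ^ 2 / 2) x x := by
      simpa using (hasDerivAt_pow 2 x).div_const 2
    have h2 : HasDerivAt (fun x : ℝ => B ^ k / k * x ^ k) (B ^ k * x ^ (k - 1)) x := by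
      have := (Real.hasDerivAt_rpow_const (p := k) (Or.inl hx)).const_mul (B ^ k / k)
      rw [← mul_assoc, div_mul_cancel₀ _ hk0.ne'] at this
      exact this
    rw [hFeq]
    exact h1.sub h2
  -- F is strictly monotone on [0, l1]
  have hmono : StrictMonoOn F (Set.Icc 0 l1) := by
    apply strictMonoOn_of_deriv_pos (convex_Icc 0 l1)
    · rw [hFeq]
      apply ContinuousOn.sub
      · fun_prop
      · exact (continuousOn_const.mul
          (fun x _ => (Real.continuousAt_rpow_const x k (Or.inr hk0.le)).continuousWithinAt))
    · intro x hx
      rw [interior_Icc] at hx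
      have hx0 : 0 < x := hx.1
      rw [(hderivF x hx0.ne').deriv]
      have hsplit : x ^ (k - 1) = x ^ (k - 2) * x := by
        rw [← Real.rpow_add_one hx0.ne' (k - 2)]
        congr 1; ring
      have hlt : x ^ (k - 2) < l1 ^ (k - 2) :=
        Real.rpow_lt_rpow hx0.le hx.2 (by linarith)
      have hBk : B ^ k * x ^ (k - 2) < 1 := by
        have : B ^ k * x ^ (k - 2) < B ^ k * l1 ^ (k - 2) := by
          exact (mul_lt_mul_iff_right₀ (Real.rpow_pos_of_pos hB k)).mpr hlt
        rwa [hl1pow, ← Real.rpow_add hB, add_neg_cancel, Real.rpow_zero] at this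
      have hxpos : 0 < x ^ (k - 2) := Real.rpow_pos_of_pos hx0 _
      rw [hsplit]
      nlinarith [hBk, hx0]
  intro t ht htT
  suffices h : γ t ≤ l0 from ⟨h, lt_of_le_of_lt h hl0_lt⟩
  by_contra h
  push_neg at h
  set c : ℝ := (l0 + min (γ t) l1) / 2 with hc
  have hminl : l0 < min (γ t) l1 := lt_min h hl0_lt
  have hc1 : l0 < c := by simp only [hc]; linarith
  have hc2 : c < γ t := by
    have := min_le_left (γ t) l1; simp only [hc]; linarith
  have hc3 : c < l1 := by
    have := min_le_right (γ t) l1; simp only [hc]; linarith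
  -- IVT on [0, t]
  have hsub : Set.Icc (0:ℝ) t ⊆ {s : ℝ | 0 ≤ s ∧ ENNReal.ofReal s < T} := by
    intro s hs
    exact ⟨hs.1, lt_of_le_of_lt (ENNReal.ofReal_le_ofReal hs.2) htT⟩
  have hcontI : ContinuousOn γ (Set.Icc 0 t) := hγ_cont.mono hsub
  have hivt := intermediate_value_Icc ht hcontI
  have hcmem : c ∈ Set.Icc (γ 0) (γ t) := ⟨by linarith, hc2.le⟩
  obtain ⟨s, hs, hγs⟩ := hivt hcmem
  have hsT : ENNReal.ofReal s < T := lt_of_le_of_lt (ENNReal.ofReal_le_ofReal hs.2) htT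
  have hFlt : F l0 < F c :=
    hmono ⟨hl0_pos.le, hl0_lt.le⟩ ⟨by linarith, hc3.le⟩ hc1
  have := hγ_F s hs.1 hsT
  rw [hγs] at this
  linarith
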